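/- Let E and F be Banach spaces, S ∈ L(E,F), and let M be a non-reflexive closed subspace of E with inclusion map J : M → E such that S∘J is an isomorphic embedding (bounded below). Then R(S∘J) : M**/M → F**/F is an isomorphic embedding, i.e., there exists c > 0 such that ‖R(S∘J)(x** + M)‖ ≥ c·‖x** + M‖ for all x** ∈ M**. -/

import Mathlib

open NormedSpace Metric Pointwise Filter

noncomputable section

variable (𝕜 : Type*) [RCLike 𝕜]

/-- A Banach space over `𝕜`, bundled. -/
structure BanachPkg where
  carrier : Type
  [inst1 : NormedAddCommGroup carrier]
  [inst2 : NormedSpace 𝕜 carrier]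
  [inst3 : CompleteSpace carrier]

attribute [instance] BanachPkg.inst1 BanachPkg.inst2 BanachPkg.inst3

variable {𝕜}

section Defs

variable {E F : Type*} [SeminormedAddCommGroup E] [NormedSpace 𝕜 E]
  [SeminormedAddCommGroup F] [NormedSpace 𝕜 F]

/-- A continuous linear operator is weakly compact if the image of the closed unit
ball is relatively compact in the weak topology. -/
def WCompact (T : E →L[𝕜] F) : Prop :=
  IsCompact (closure ((toWeakSpace 𝕜 F) '' (T '' closedBall 0 1)))

/-- The Banach-space adjoint of a continuous linear operator. -/
def dualOp (S : E →L[𝕜] F) : StrongDual 𝕜 F →L[𝕜] StrongDual 𝕜 E :=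
  (ContinuousLinearMap.compL 𝕜 E F 𝕜).flip S

@[simp] theorem dualOp_apply (S : E →L[𝕜] F) (f : StrongDual 𝕜 F) (x : E) :
    dualOp S f x = f (S x) := rfl

/-- The second adjoint `S** : E** → F**`. -/
def bidualOp (S : E →L[𝕜] F) : StrongDual 𝕜 (StrongDual 𝕜 E) →L[𝕜] StrongDual 𝕜 (StrongDual 𝕜 F) :=
  dualOp (dualOp S)

end Defs

/-- The bidual of a normed space. -/
abbrev Bidual (𝕜 : Type*) [RCLike 𝕜] (E : Type*) [SeminormedAddCommGroup E]
    [NormedSpace 𝕜 E] : Type _ :=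
  StrongDual 𝕜 (StrongDual 𝕜 E)

instance Bidual.instSeminormedAddCommGroup (𝕜 : Type*) [RCLike 𝕜] (E : Type*)
    [SeminormedAddCommGroup E] [NormedSpace 𝕜 E] : SeminormedAddCommGroup (Bidual 𝕜 E) :=
  inferInstance

instance Bidual.instNormedSpace (𝕜 : Type*) [RCLike 𝕜] (E : Type*)
    [SeminormedAddCommGroup E] [NormedSpace 𝕜 E] : NormedSpace 𝕜 (Bidual 𝕜 E) :=
  inferInstance

/-- The quotient `E**/E` of the bidual by the canonical image of `E`. -/
abbrev BidualQuot (𝕜 : Type*) [RCLike 𝕜] (E : Type*) [NormedAddCommGroup E]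
    [NormedSpace 𝕜 E] : Type _ :=
  Bidual 𝕜 E ⧸ LinearMap.range (inclusionInDoubleDual 𝕜 E : E →ₗ[𝕜] StrongDual 𝕜 (StrongDual 𝕜 E))

section Defs3

variable {E F : Type*} [NormedAddCommGroup E] [NormedSpace 𝕜 E]
  [NormedAddCommGroup F] [NormedSpace 𝕜 F]

/-- `RS` is the operator `R(S) : E**/E → F**/F` induced by `S`, i.e. it satisfies
`R(S)(x** + E) = S** x** + F`  (`R(S) = 0` iff `S` is weakly compact). -/
def IsRRep (S : E →L[𝕜] F) (RS : BidualQuot 𝕜 E →L[𝕜] BidualQuot 𝕜 F) : Prop :=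
  ∀ u : Bidual 𝕜 E,
    RS (Submodule.Quotient.mk u) = Submodule.Quotient.mk (bidualOp S u)

end Defs3

section Aux

variable {M F : Type*} [NormedAddCommGroup M] [NormedSpace ℝ M]
  [NormedAddCommGroup F] [NormedSpace ℝ F]

/-- If `T` is bounded below by `c`, then its second adjoint is bounded below by `c`. -/
theorem bidualOp_antilipschitz (T : M →L[ℝ] F) {c : ℝ} (hc : 0 < c)
    (hbd : ∀ m : M, c * ‖m‖ ≤ ‖T m‖) (u : Bidual ℝ M) :
    c * ‖u‖ ≤ ‖bidualOp T u‖ := by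
  have hinj : Function.Injective T := by
    intro a b hab
    have h1 := hbd (a - b)
    rw [map_sub, hab, sub_self, norm_zero] at h1
    have h2 := norm_nonneg (a - b)
    have h3 : ‖a - b‖ = 0 := by nlinarith
    exact sub_eq_zero.mp (norm_eq_zero.mp h3)
  have hinj' : Function.Injective (T : M →ₗ[ℝ] F) := hinj
  set N : Submodule ℝ F := LinearMap.range (T : M →ₗ[ℝ] F) with hN
  set e : M ≃ₗ[ℝ] N := LinearEquiv.ofInjective (T : M →ₗ[ℝ] F) hinj' with he
  have hecoe : ∀ m : M, ((e m : N) : F) = T m := fun m => by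
    rfl
  have hTinv_bound : ∀ n : N, ‖e.symm n‖ ≤ c⁻¹ * ‖n‖ := by
    intro n
    have h1 := hbd (e.symm n)
    have h2 : ((e (e.symm n) : N) : F) = (n : F) := by rw [e.apply_symm_apply]
    rw [hecoe] at h2
    rw [h2] at h1
    have hn : ‖n‖ = ‖(n : F)‖ := rfl
    rw [hn, inv_mul_eq_div, le_div_iff₀ hc]
    linarith
  set Tinv : N →L[ℝ] M := LinearMap.mkContinuous e.symm.toLinearMap c⁻¹ hTinv_bound with hTi
  have hTinv_norm : ‖Tinv‖ ≤ c⁻¹ :=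
    LinearMap.mkContinuous_norm_le _ (by positivity) _
  have hTinvT : ∀ m : M, Tinv ⟨T m, ⟨m, rfl⟩⟩ = m := by
    intro m
    have h1 : (⟨T m, ⟨m, rfl⟩⟩ : N) = e m := by
      apply Subtype.ext
      rw [hecoe]
    rw [h1]
    show e.symm (e m) = m
    exact e.symm_apply_apply m
  have hsurj : ∀ g : StrongDual ℝ M, ∃ f : StrongDual ℝ F, dualOp T f = g ∧ ‖f‖ ≤ c⁻¹ * ‖g‖ := by
    intro g
    obtain ⟨f, hfe, hfn⟩ := exists_extension_norm_eq N (g.comp Tinv)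
    refine ⟨f, ?_, ?_⟩
    · ext m
      have h1 := hfe ⟨T m, ⟨m, rfl⟩⟩
      simp only [ContinuousLinearMap.comp_apply] at h1
      rw [hTinvT] at h1
      simpa [dualOp_apply] using h1
    · rw [hfn]
      calc ‖g.comp Tinv‖ ≤ ‖g‖ * ‖Tinv‖ := ContinuousLinearMap.opNorm_comp_le _ _
        _ ≤ ‖g‖ * c⁻¹ := mul_le_mul_of_nonneg_left hTinv_norm (norm_nonneg g)
        _ = c⁻¹ * ‖g‖ := mul_comm _ _
  have key : ‖u‖ ≤ c⁻¹ * ‖bidualOp T u‖ := by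
    refine ContinuousLinearMap.opNorm_le_bound u (by positivity) ?_
    intro g
    obtain ⟨f, hf, hfn⟩ := hsurj g
    have h1 : u g = (bidualOp T u) f := by rw [← hf]; rfl
    rw [h1]
    calc ‖(bidualOp T u) f‖ ≤ ‖bidualOp T u‖ * ‖f‖ :=
          ContinuousLinearMap.le_opNorm _ _
      _ ≤ ‖bidualOp T u‖ * (c⁻¹ * ‖g‖) :=
          mul_le_mul_of_nonneg_left hfn (norm_nonneg _)
      _ = c⁻¹ * ‖bidualOp T u‖ * ‖g‖ := by ring
  have h4 := mul_le_mul_of_nonneg_left key hc.le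
  rw [← mul_assoc, mul_inv_cancel₀ hc.ne', one_mul] at h4
  exact h4

end Aux

set_option maxHeartbeats 1000000 in
/-- Let `M` be a non-reflexive closed subspace of `E` with inclusion `J : M → E` such that
`S ∘ J` is an isomorphic embedding. Then `R(S∘J) : M**/M → F**/F` is an isomorphic
embedding. -/
theorem RRep_embedding_of_embedding_restriction
    {E F : Type*} [NormedAddCommGroup E] [NormedSpace ℝ E] [CompleteSpace E]
    [NormedAddCommGroup F] [NormedSpace ℝ F] [CompleteSpace F]
    (S : E →L[ℝ] F) (M : Submodule ℝ E) (hMclosed : IsClosed (M : Set E))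
    (hMnonrefl : ¬ Function.Surjective (inclusionInDoubleDual ℝ M))
    (hemb : ∃ c > 0, ∀ m : M, c * ‖m‖ ≤ ‖(S.comp M.subtypeL) m‖)
    (RSJ : BidualQuot ℝ M →L[ℝ] BidualQuot ℝ F)
    (hRSJ : IsRRep (S.comp M.subtypeL) RSJ) :
    ∃ c > 0, ∀ x : Bidual ℝ M,
      c * ‖(Submodule.Quotient.mk x : BidualQuot ℝ M)‖ ≤
        ‖RSJ (Submodule.Quotient.mk x)‖ := by
  obtain ⟨c, hc, hbd⟩ := hemb
  set T : M →L[ℝ] F := S.comp M.subtypeL with hT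
  have hbid := bidualOp_antilipschitz T hc hbd
  refine ⟨c / 2, by positivity, fun x => ?_⟩
  rw [hRSJ x]
  set u : Bidual ℝ F := bidualOp T x with hu
  -- preliminaries on the range of `T`
  haveI : CompleteSpace M := hMclosed.completeSpace_coe
  set N : Submodule ℝ F := LinearMap.range (T : M →ₗ[ℝ] F) with hN
  have hanti : AntilipschitzWith (⟨c⁻¹, by positivity⟩ : NNReal) T := by
    apply T.antilipschitz_of_bound
    intro m
    have h1 := hbd m
    show ‖m‖ ≤ c⁻¹ * ‖T m‖
    rw [inv_mul_eq_div, le_div_iff₀ hc]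
    linarith
  have hNclosed : IsClosed (N : Set F) := by
    have h1 := hanti.isClosed_range T.uniformContinuous
    have h2 : (N : Set F) = Set.range T := by
      ext z
      simp [hN, LinearMap.mem_range, Set.mem_range]
    rwa [h2]
  haveI := hNclosed
  -- the key distance estimate
  have hdist : ∀ y : F, ∀ δ > (0 : ℝ),
      ∃ m : M, ‖y - T m‖ ≤ ‖u - inclusionInDoubleDual ℝ F y‖ + δ := by
    intro y δ hδ
    set d : ℝ := ‖u - inclusionInDoubleDual ℝ F y‖ with hd
    by_cases hz : (Submodule.Quotient.mk y : F ⧸ N) = 0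
    · have hyN : y ∈ N := (Submodule.Quotient.mk_eq_zero N).mp hz
      obtain ⟨m, hm⟩ := hyN
      refine ⟨m, ?_⟩
      have hm' : T m = y := hm
      rw [hm', sub_self, norm_zero]
      positivity
    · obtain ⟨g, hg1, hgy⟩ := exists_dual_vector ℝ (Submodule.Quotient.mk y : F ⧸ N) (norm_ne_zero_iff.mpr hz)
      have hφb : ∀ z : F, ‖(g.toLinearMap.comp N.mkQ) z‖ ≤ 1 * ‖z‖ := by
        intro z
        have h1 : (g.toLinearMap.comp N.mkQ) z = g (Submodule.Quotient.mk z) := rfl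
        rw [h1, one_mul]
        calc ‖g (Submodule.Quotient.mk z)‖ ≤ ‖g‖ * ‖(Submodule.Quotient.mk z : F ⧸ N)‖ :=
              g.le_opNorm _
          _ ≤ 1 * ‖z‖ := by
              rw [hg1]
              exact mul_le_mul_of_nonneg_left (Submodule.Quotient.norm_mk_le N z) zero_le_one
          _ = ‖z‖ := one_mul _
      set φ : F →L[ℝ] ℝ := LinearMap.mkContinuous (g.toLinearMap.comp N.mkQ) 1 hφb with hφ
      have hφnorm : ‖φ‖ ≤ 1 := LinearMap.mkContinuous_norm_le _ zero_le_one _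
      have hφap : ∀ z : F, φ z = g (Submodule.Quotient.mk z) := fun z => rfl
      have hφT : dualOp T φ = 0 := by
        ext m
        have h1 : (dualOp T φ) m = φ (T m) := rfl
        rw [h1, hφap]
        have h2 : (Submodule.Quotient.mk (T m) : F ⧸ N) = 0 :=
          (Submodule.Quotient.mk_eq_zero N).mpr ⟨m, rfl⟩
        rw [h2, map_zero]
        rfl
      have huφ : u φ = 0 := by
        have h1 : u φ = x (dualOp T φ) := rfl
        rw [h1, hφT, map_zero]
      have hφy : φ y = ‖(Submodule.Quotient.mk y : F ⧸ N)‖ := by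
        rw [hφap]; exact hgy
      have key : ‖(Submodule.Quotient.mk y : F ⧸ N)‖ ≤ d := by
        have h1 : φ y = (inclusionInDoubleDual ℝ F y - u) φ := by
          rw [ContinuousLinearMap.sub_apply, huφ, sub_zero]
          rfl
        calc ‖(Submodule.Quotient.mk y : F ⧸ N)‖ = ‖φ y‖ := by
              rw [hφy]; exact (Real.norm_of_nonneg (norm_nonneg _)).symm
          _ = ‖(inclusionInDoubleDual ℝ F y - u) φ‖ := by rw [h1]
          _ ≤ ‖inclusionInDoubleDual ℝ F y - u‖ * ‖φ‖ :=
              ContinuousLinearMap.le_opNorm _ _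
          _ ≤ ‖inclusionInDoubleDual ℝ F y - u‖ * 1 :=
              mul_le_mul_of_nonneg_left hφnorm (norm_nonneg _)
          _ = d := by rw [mul_one, hd, norm_sub_rev]
      obtain ⟨w, hw, hwn⟩ :=
        Submodule.Quotient.norm_mk_lt (Submodule.Quotient.mk y : F ⧸ N) hδ
      have hywN : y - w ∈ N := (Submodule.Quotient.eq N).mp hw.symm
      obtain ⟨m, hm⟩ := hywN
      refine ⟨m, ?_⟩
      have hm' : T m = y - w := hm
      have h3 : y - T m = w := by rw [hm']; abel
      rw [h3]
      linarith
  -- choose a good representative of `mk u`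
  refine le_of_forall_pos_le_add ?_
  intro ε hε
  have hδ : (0 : ℝ) < ε / 2 := by positivity
  obtain ⟨v, hv, hvn⟩ :=
    Submodule.Quotient.norm_mk_lt (Submodule.Quotient.mk u : BidualQuot ℝ F) hδ
  have huv : u - v ∈ LinearMap.range (inclusionInDoubleDual ℝ F : F →ₗ[ℝ] StrongDual ℝ (StrongDual ℝ F)) := by
    have h1 : v - u ∈ LinearMap.range (inclusionInDoubleDual ℝ F : F →ₗ[ℝ] StrongDual ℝ (StrongDual ℝ F)) :=
      (Submodule.Quotient.eq _).mp hv
    have h2 : u - v = -(v - u) := by abel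
    rw [h2]
    exact neg_mem h1
  obtain ⟨y, hy⟩ := huv
  have hdy : ‖u - inclusionInDoubleDual ℝ F y‖ < ‖(Submodule.Quotient.mk u : BidualQuot ℝ F)‖ + ε / 2 := by
    have h1 : u - inclusionInDoubleDual ℝ F y = v := by rw [show inclusionInDoubleDual ℝ F y = u - v from hy]; abel
    rw [h1]; exact hvn
  obtain ⟨m, hm⟩ := hdist y (ε / 2) hδ
  -- transfer back
  have h3 : inclusionInDoubleDual ℝ F (T m) = bidualOp T (inclusionInDoubleDual ℝ M m) := rfl
  have h4 : ‖bidualOp T (x - inclusionInDoubleDual ℝ M m)‖ ≤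
      2 * ‖u - inclusionInDoubleDual ℝ F y‖ + ε / 2 := by
    have hmap : bidualOp T (x - inclusionInDoubleDual ℝ M m) =
        u - inclusionInDoubleDual ℝ F (T m) := by
      rw [map_sub, h3, hu]
    rw [hmap]
    have htri : ‖u - inclusionInDoubleDual ℝ F (T m)‖ ≤
        ‖u - inclusionInDoubleDual ℝ F y‖ + ‖inclusionInDoubleDual ℝ F (y - T m)‖ := by
      have : u - inclusionInDoubleDual ℝ F (T m) =
          (u - inclusionInDoubleDual ℝ F y) + inclusionInDoubleDual ℝ F (y - T m) := by
        rw [map_sub]; abel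
      rw [this]
      exact norm_add_le _ _
    have hdd : ‖inclusionInDoubleDual ℝ F (y - T m)‖ ≤ ‖y - T m‖ :=
      double_dual_bound ℝ F _
    linarith
  have h5 : c * ‖x - inclusionInDoubleDual ℝ M m‖ ≤
      2 * ‖u - inclusionInDoubleDual ℝ F y‖ + ε / 2 := (hbid _).trans h4
  have h6 : ‖(Submodule.Quotient.mk x : BidualQuot ℝ M)‖ ≤
      ‖x - inclusionInDoubleDual ℝ M m‖ := by
    have h1 : (Submodule.Quotient.mk x : BidualQuot ℝ M) =
        Submodule.Quotient.mk (x - inclusionInDoubleDual ℝ M m) := by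
      rw [Submodule.Quotient.eq]
      have h2 : x - (x - inclusionInDoubleDual ℝ M m) = inclusionInDoubleDual ℝ M m := by abel
      rw [h2]
      exact ⟨m, rfl⟩
    rw [h1]
    exact Submodule.Quotient.norm_mk_le _ _
  have h7 := mul_le_mul_of_nonneg_left h6 (by positivity : (0 : ℝ) ≤ c / 2)
  nlinarith [norm_nonneg (Submodule.Quotient.mk x : BidualQuot ℝ M)]

end
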